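/- If X^ν is pairwise independent (i.e., X^ν_a and X^ν_b are independent for all a ≠ b), then for every finite A ⊆ S, P(X^ν ≡ 0 on A) = ∏_{a∈A} P(X^ν_a = 0); that is, X^ν is an independent process. -/

import Mathlib

open MeasureTheory ProbabilityTheory Finset

/-- Let `S` be countable and `X = X^ν` a Poisson representable process,
i.e. `P(X ≡ 0 on A) = exp (-ν (𝓢_A^∪))` for all finite `A ⊆ S`, with `ν (𝓢_i) < ∞` for
each `i`.  If `X` is pairwise independent (`X_a` and `X_b` independent for all `a ≠ b`),
then for every finite `A ⊆ S`, `P(X ≡ 0 on A) = ∏_{a ∈ A} P(X_a = 0)`; that is, `X` is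
an independent process. -/
theorem stmt2 {S : Type*} [Countable S]
    {Ω : Type*} [MeasurableSpace Ω] (P : Measure Ω) [IsProbabilityMeasure P]
    (ν : Measure (Set S)) (hfin : ∀ i : S, ν {T : Set S | i ∈ T} ≠ ⊤)
    (X : S → Ω → Bool)
    (hrep : ∀ A : Finset S,
      P {ω | ∀ i ∈ A, X i ω = false}
        = ENNReal.ofReal (Real.exp (-(ν {T : Set S | ∃ i ∈ A, i ∈ T}).toReal)))
    (hpair : ∀ a b : S, a ≠ b → IndepFun (X a) (X b) P) :
    ∀ A : Finset S,
      P {ω | ∀ i ∈ A, X i ω = false} = ∏ a ∈ A, P {ω | X a ω = false} := by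
  classical
  set Sm : S → Set (Set S) := fun i => {T : Set S | i ∈ T} with hSm
  have hSmMeas : ∀ i : S, MeasurableSet (Sm i) := fun i => measurableSet_mem i
  -- single-point formula
  have hone : ∀ a : S, P {ω | X a ω = false}
      = ENNReal.ofReal (Real.exp (-(ν (Sm a)).toReal)) := by
    intro a
    have h := hrep {a}
    have h1 : {ω | ∀ i ∈ ({a} : Finset S), X i ω = false} = {ω | X a ω = false} := by
      ext ω; simp
    have h2 : {T : Set S | ∃ i ∈ ({a} : Finset S), i ∈ T} = Sm a := by
      ext T; simp [hSm]
    rw [h1, h2] at h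
    exact h
  -- pairwise overlaps are null
  have hnull : ∀ a b : S, a ≠ b → ν (Sm a ∩ Sm b) = 0 := by
    intro a b hab
    have hindep := (indepFun_iff_measure_inter_preimage_eq_mul.mp (hpair a b hab))
      {false} {false} (measurableSet_singleton _) (measurableSet_singleton _)
    have hpre : ∀ c : S, X c ⁻¹' {false} = {ω | X c ω = false} := by
      intro c; ext ω; simp
    rw [hpre, hpre] at hindep
    have hset : {ω | ∀ i ∈ ({a, b} : Finset S), X i ω = false}
        = {ω | X a ω = false} ∩ {ω | X b ω = false} := by
      ext ω; simp [Set.mem_inter_iff]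
    have hsetT : {T : Set S | ∃ i ∈ ({a, b} : Finset S), i ∈ T} = Sm a ∪ Sm b := by
      ext T; simp [hSm, Set.mem_union]
    have h2 := hrep {a, b}
    rw [hset, hsetT, hindep, hone a, hone b,
      ← ENNReal.ofReal_mul (Real.exp_nonneg _), ← Real.exp_add] at h2
    have h4 : (ν (Sm a ∪ Sm b)).toReal = (ν (Sm a)).toReal + (ν (Sm b)).toReal := by
      have := (ENNReal.ofReal_eq_ofReal_iff (Real.exp_nonneg _) (Real.exp_nonneg _)).mp h2
      have := Real.exp_eq_exp.mp this
      linarith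
    have hUfin : ν (Sm a ∪ Sm b) ≠ ⊤ := by
      refine ne_top_of_le_ne_top ?_ (measure_union_le _ _)
      exact ENNReal.add_ne_top.mpr ⟨hfin a, hfin b⟩
    have h5 : ν (Sm a ∪ Sm b) = ν (Sm a) + ν (Sm b) := by
      rw [← ENNReal.ofReal_toReal hUfin, h4, ENNReal.ofReal_add ENNReal.toReal_nonneg
        ENNReal.toReal_nonneg, ENNReal.ofReal_toReal (hfin a), ENNReal.ofReal_toReal (hfin b)]
    have h6 := measure_union_add_inter (μ := ν) (Sm a) (hSmMeas b)
    rw [h5] at h6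
    have h7 : ν (Sm a) + ν (Sm b) ≠ ⊤ := ENNReal.add_ne_top.mpr ⟨hfin a, hfin b⟩
    nth_rewrite 2 [← add_zero (ν (Sm a) + ν (Sm b))] at h6
    exact (ENNReal.add_right_inj h7).mp h6
  -- additivity over finite unions
  have hadd : ∀ A : Finset S, ν {T : Set S | ∃ i ∈ A, i ∈ T} = ∑ i ∈ A, ν (Sm i) := by
    intro A
    induction A using Finset.induction_on with
    | empty => simp
    | @insert a A ha ih =>
      have hUeq : ∀ B : Finset S, {T : Set S | ∃ i ∈ B, i ∈ T} = ⋃ i ∈ B, Sm i := by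
        intro B; ext T; simp [hSm]
      have hsplit : {T : Set S | ∃ i ∈ insert a A, i ∈ T}
          = Sm a ∪ {T : Set S | ∃ i ∈ A, i ∈ T} := by
        ext T
        simp only [hSm, Finset.mem_insert, Set.mem_union, Set.mem_setOf_eq]
        constructor
        · rintro ⟨i, hi | hi, hT⟩
          · exact Or.inl (hi ▸ hT)
          · exact Or.inr ⟨i, hi, hT⟩
        · rintro (h | ⟨i, hi, hT⟩)
          · exact ⟨a, Or.inl rfl, h⟩
          · exact ⟨i, Or.inr hi, hT⟩
      have hAmeas : MeasurableSet {T : Set S | ∃ i ∈ A, i ∈ T} := by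
        rw [hUeq]; exact A.measurableSet_biUnion (fun i _ => hSmMeas i)
      have hinter : ν (Sm a ∩ {T : Set S | ∃ i ∈ A, i ∈ T}) = 0 := by
        have hsub : Sm a ∩ {T : Set S | ∃ i ∈ A, i ∈ T} ⊆ ⋃ i ∈ A, (Sm a ∩ Sm i) := by
          rw [hUeq, Set.inter_iUnion₂]
        refine le_antisymm (le_trans (measure_mono hsub) ?_) zero_le
        calc ν (⋃ i ∈ A, (Sm a ∩ Sm i)) ≤ ∑ i ∈ A, ν (Sm a ∩ Sm i) :=
              measure_biUnion_finset_le A _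
          _ = 0 := Finset.sum_eq_zero fun i hi =>
              hnull a i (fun h => ha (h ▸ hi))
      have h6 := measure_union_add_inter (μ := ν) (Sm a) hAmeas
      rw [hinter, add_zero] at h6
      rw [hsplit, h6, ih, Finset.sum_insert ha]
  -- conclusion
  intro A
  have hsumfin : ∀ i ∈ A, ν (Sm i) ≠ ⊤ := fun i _ => hfin i
  rw [hrep A, hadd A, ENNReal.toReal_sum hsumfin]
  rw [← Finset.sum_neg_distrib, Real.exp_sum,
    ENNReal.ofReal_prod_of_nonneg (fun i _ => Real.exp_nonneg _)]
  exact Finset.prod_congr rfl fun a _ => (hone a).symm
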